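/- arXiv:0909.0362 — 5 statements merged into one kernel-verified Lean document; each statement's English description precedes it below -/
import Mathlib

section
/- If p is an odd prime and p ≡ 1 or 4 (mod 5), then the period k(p) of the Fibonacci sequence modulo p divides p − 1. -/
private instance fact5 : Fact (Nat.Prime 5) := ⟨by norm_num⟩
private lemma leg51 : legendreSym 5 1 = 1 := by decide
private lemma leg54 : legendreSym 5 4 = 1 := by decide

theorem fib_period_dvd_p_sub_one (p : ℕ) (hp : p.Prime) (hodd : Odd p)
    (h5 : p % 5 = 1 ∨ p % 5 = 4) (k : ℕ)
    (hk : IsLeast {i : ℕ | 0 < i ∧ Nat.fib i ≡ 0 [MOD p] ∧ Nat.fib (i + 1) ≡ 1 [MOD p]} k) :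
    k ∣ p - 1 := by
  haveI : Fact p.Prime := ⟨hp⟩
  haveI : Fact (Nat.Prime 5) := ⟨by norm_num⟩
  obtain ⟨⟨hk0, hfk, hfk1⟩, hlb⟩ := hk
  have hp2 : p ≠ 2 := by rcases h5 with h | h <;> omega
  have hp5 : p ≠ 5 := by rcases h5 with h | h <;> omega
  have hp3 : 3 ≤ p := by
    have := hp.two_le; rcases hodd with ⟨m, hm⟩; omega
  -- periodicity with period k
  have hper : ∀ n, Nat.fib (n + k) ≡ Nat.fib n [MOD p] := by
    intro n
    cases n with
    | zero => simpa using hfk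
    | succ m =>
      have h := Nat.fib_add m k
      rw [show m + 1 + k = m + k + 1 by ring, h]
      calc Nat.fib m * Nat.fib k + Nat.fib (m + 1) * Nat.fib (k + 1)
          ≡ Nat.fib m * 0 + Nat.fib (m + 1) * 1 [MOD p] :=
            Nat.ModEq.add (Nat.ModEq.mul_left _ hfk) (Nat.ModEq.mul_left _ hfk1)
        _ = Nat.fib (m + 1) := by ring
  have hperm : ∀ j n, Nat.fib (n + j * k) ≡ Nat.fib n [MOD p] := by
    intro j
    induction j with
    | zero => intro n; rw [Nat.zero_mul, Nat.add_zero]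
    | succ i ih =>
      intro n
      have he : n + (i + 1) * k = n + i * k + k := by ring
      rw [he]
      exact (hper _).trans (ih n)
  -- 5 is a square mod p
  have h5ne : ((5 : ℕ) : ZMod p) ≠ 0 := by
    rw [Ne, ZMod.natCast_eq_zero_iff]
    intro h
    have := (Nat.prime_dvd_prime_iff_eq hp (by norm_num)).mp h
    omega
  have hsq : IsSquare ((5 : ℕ) : ZMod p) := by
    rw [← legendreSym.eq_one_iff' p h5ne]
    rw [show ((5 : ℕ) : ℤ) = (5 : ℤ) by norm_cast]
    have hrec : legendreSym p 5 = legendreSym 5 p :=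
      legendreSym.quadratic_reciprocity_one_mod_four (by norm_num) hp2
    rw [hrec, legendreSym.mod]
    have hmod : (p : ℤ) % ((5 : ℕ) : ℤ) = ((p % 5 : ℕ) : ℤ) := by push_cast; ring
    rcases h5 with h | h
    · rw [hmod, h, show (((1 : ℕ) : ℤ)) = (1 : ℤ) by norm_cast]; exact leg51
    · rw [hmod, h, show (((4 : ℕ) : ℤ)) = (4 : ℤ) by norm_cast]; exact leg54
  obtain ⟨s, hs⟩ := hsq
  have hs2 : s * s = 5 := hs.symm
  -- golden ratio setup
  set φ : ZMod p := (1 + s) / 2 with hφ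
  set ψ : ZMod p := (1 - s) / 2 with hψ
  have h2ne : (2 : ZMod p) ≠ 0 := by
    intro h
    have h' : ((2 : ℕ) : ZMod p) = 0 := by exact_mod_cast h
    have := (Nat.prime_dvd_prime_iff_eq hp (by norm_num)).mp
      ((ZMod.natCast_eq_zero_iff _ _).mp h')
    omega
  have hφψ : φ * ψ = -1 := by
    rw [hφ, hψ]
    field_simp
    linear_combination -hs2
  have hsub : φ - ψ = s := by
    rw [hφ, hψ]
    field_simp
    ring
  have hφsq : φ * φ = φ + 1 := by
    rw [hφ]
    field_simp
    linear_combination hs2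
  have hψsq : ψ * ψ = ψ + 1 := by
    rw [hψ]
    field_simp
    linear_combination hs2
  -- Binet formula mod p
  have hbinet : ∀ n, s * (Nat.fib n : ZMod p) = φ ^ n - ψ ^ n := by
    intro n
    induction n using Nat.strong_induction_on with
    | _ n ih =>
      match n with
      | 0 => simp
      | 1 => simpa using hsub.symm
      | (m + 2) =>
        have h1 := ih (m + 1) (by omega)
        have h2 := ih m (by omega)
        have hf : Nat.fib (m + 2) = Nat.fib m + Nat.fib (m + 1) := Nat.fib_add_two
        rw [hf]
        push_cast
        rw [mul_add, h1, h2]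
        have e1 : φ ^ (m + 2) = φ ^ m * (φ * φ) := by ring
        have e2 : ψ ^ (m + 2) = ψ ^ m * (ψ * ψ) := by ring
        rw [e1, e2, hφsq, hψsq]
        have e3 : φ ^ (m + 1) = φ ^ m * φ := by ring
        have e4 : ψ ^ (m + 1) = ψ ^ m * ψ := by ring
        rw [e3, e4]
        ring
  have hφne : φ ≠ 0 := by
    intro h
    rw [h, zero_mul] at hφψ
    exact one_ne_zero (α := ZMod p) (by linear_combination hφψ)
  have hψne : ψ ≠ 0 := by
    intro h
    rw [h, mul_zero] at hφψ
    exact one_ne_zero (α := ZMod p) (by linear_combination hφψ)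
  have hsne : s ≠ 0 := by
    intro h; rw [h, zero_mul] at hs2; exact h5ne (by exact_mod_cast hs2.symm)
  have hφp : φ ^ (p - 1) = 1 := ZMod.pow_card_sub_one_eq_one hφne
  have hψp : ψ ^ (p - 1) = 1 := ZMod.pow_card_sub_one_eq_one hψne
  -- fib (p-1) ≡ 0 and fib (p-1+1) ≡ 1
  have hfib1 : (Nat.fib (p - 1) : ZMod p) = 0 := by
    have := hbinet (p - 1)
    rw [hφp, hψp, sub_self] at this
    exact (mul_eq_zero.mp this).resolve_left hsne
  have hfib2 : (Nat.fib (p - 1 + 1) : ZMod p) = 1 := by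
    have := hbinet (p - 1 + 1)
    rw [pow_succ, pow_succ, hφp, hψp, one_mul, one_mul, hsub] at this
    exact mul_left_cancel₀ hsne (this.trans (mul_one s).symm)
  have hmem : Nat.fib (p - 1) ≡ 0 [MOD p] ∧ Nat.fib (p - 1 + 1) ≡ 1 [MOD p] := by
    constructor
    · exact (ZMod.natCast_eq_natCast_iff _ _ _).mp (by simpa using hfib1)
    · exact (ZMod.natCast_eq_natCast_iff _ _ _).mp (by simpa using hfib2)
  -- conclude divisibility via minimality
  by_contra hdvd
  have hr0 : (p - 1) % k ≠ 0 := fun h => hdvd (Nat.dvd_of_mod_eq_zero h)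
  have hrk : (p - 1) % k < k := Nat.mod_lt _ hk0
  have hdecomp : p - 1 = (p - 1) % k + (p - 1) / k * k := by
    rw [Nat.mod_add_div']
  have hmem' : (p - 1) % k ∈ {i : ℕ | 0 < i ∧ Nat.fib i ≡ 0 [MOD p] ∧ Nat.fib (i + 1) ≡ 1 [MOD p]} := by
    refine ⟨Nat.pos_of_ne_zero hr0, ?_, ?_⟩
    · exact (hperm ((p - 1) / k) ((p - 1) % k)).symm.trans (hdecomp ▸ hmem.1)
    · have he : (p - 1) % k + 1 + (p - 1) / k * k = p - 1 + 1 := by omega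
      have h := hperm ((p - 1) / k) ((p - 1) % k + 1)
      rw [he] at h
      exact h.symm.trans hmem.2
  exact absurd (hlb hmem') (by omega)
end

section
/- Let p be an odd prime with p ≡ 2 or 3 (mod 5), and let λ be an element of the finite field F_{p²} satisfying λ² = λ + 1. Then λ^{2(p+1)} = 1. -/
lemma not_isSquare_two_zmod_five : ¬ IsSquare ((2 : ℕ) : ZMod 5) := by decide
lemma not_isSquare_three_zmod_five : ¬ IsSquare ((3 : ℕ) : ZMod 5) := by decide

theorem lambda_pow_two_p_add_one (p : ℕ) (hp : p.Prime) (hodd : Odd p)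
    (h5 : p % 5 = 2 ∨ p % 5 = 3)
    (F : Type*) [Field F] [Fintype F] (hcard : Fintype.card F = p ^ 2)
    (lam : F) (hlam : lam ^ 2 = lam + 1) :
    lam ^ (2 * (p + 1)) = 1 := by
  haveI : Fact p.Prime := ⟨hp⟩
  -- characteristic of F is p
  obtain ⟨q, hqinst⟩ := CharP.exists F
  haveI := hqinst
  obtain ⟨n, hq, hcard'⟩ := FiniteField.card F q
  have hqp : q = p := by
    have h1 : q ∣ p ^ 2 := by
      rw [← hcard, hcard']
      exact dvd_pow_self q n.pos.ne'
    exact ((Nat.prime_dvd_prime_iff_eq hq hp).mp (hq.dvd_of_dvd_pow h1))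
  haveI : CharP F p := hqp ▸ hqinst
  -- Frobenius: (lam^p)^2 = lam^p + 1
  have hfrob : (lam ^ p) ^ 2 = lam ^ p + 1 := by
    have h1 : (frobenius F p) (lam ^ 2) = (frobenius F p) (lam + 1) := by rw [hlam]
    simpa [frobenius_def, map_add, map_pow, map_one, ← pow_mul, mul_comm] using h1
  -- any root of x^2 = x + 1 is lam or 1 - lam
  have hroots : ∀ μ : F, μ ^ 2 = μ + 1 → μ = lam ∨ μ = 1 - lam := by
    intro μ hμ
    have h0 : (μ - lam) * (μ - (1 - lam)) = 0 := by linear_combination hμ - hlam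
    rcases mul_eq_zero.mp h0 with h | h
    · left; exact sub_eq_zero.mp h
    · right; exact sub_eq_zero.mp h
  rcases hroots _ hfrob with hcase | hcase
  · -- lam^p = lam leads to contradiction
    exfalso
    -- lam is in the image of ZMod p
    set g : ZMod p →+* F := ZMod.castHom (dvd_refl p) F with hg
    have hginj : Function.Injective g := g.injective
    have hrootmem : ∀ a : ZMod p, (g a) ^ p = g a := by
      intro a
      have := RingHom.map_frobenius g p a
      simpa [frobenius_def, ZMod.pow_card] using this.symm
    -- count roots of X^p - X
    classical
    set f : Polynomial F := Polynomial.X ^ p - Polynomial.X with hf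
    have hfne : f ≠ 0 := FiniteField.X_pow_card_sub_X_ne_zero F hp.one_lt
    have hdeg : f.natDegree = p := FiniteField.X_pow_card_sub_X_natDegree_eq F hp.one_lt
    have hrootsle : f.roots.toFinset.card ≤ p := by
      calc f.roots.toFinset.card ≤ Multiset.card f.roots := f.roots.toFinset_card_le
        _ ≤ f.natDegree := f.card_roots'
        _ = p := hdeg
    have hmem : ∀ x : F, x ^ p = x → x ∈ f.roots.toFinset := by
      intro x hx
      simp only [Multiset.mem_toFinset, Polynomial.mem_roots hfne, Polynomial.IsRoot, hf]
      simp [hx]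
      rw [← hf]; exact hfne
    have himage : (Finset.univ.image g) ⊆ f.roots.toFinset := by
      intro x hx
      obtain ⟨a, _, rfl⟩ := Finset.mem_image.mp hx
      exact hmem _ (hrootmem a)
    have hcardim : (Finset.univ.image g).card = p := by
      rw [Finset.card_image_of_injective _ hginj, Finset.card_univ, ZMod.card]
    have hlam_mem : lam ∈ Finset.univ.image g := by
      by_contra hnot
      have hins : insert lam (Finset.univ.image g) ⊆ f.roots.toFinset := by
        intro x hx
        rcases Finset.mem_insert.mp hx with rfl | hx
        · exact hmem _ hcase
        · exact himage hx
      have := Finset.card_le_card hins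
      rw [Finset.card_insert_of_notMem hnot, hcardim] at this
      omega
    obtain ⟨a, _, ha⟩ := Finset.mem_image.mp hlam_mem
    -- a satisfies a^2 = a + 1 in ZMod p
    have ha2 : a ^ 2 = a + 1 := by
      apply hginj
      rw [map_pow, map_add, map_one, ha, hlam]
    -- so 5 is a square mod p
    have hsq5 : IsSquare (5 : ZMod p) := by
      refine ⟨2 * a - 1, ?_⟩
      linear_combination -4 * ha2
    -- quadratic reciprocity: 5 square mod p iff p square mod 5
    haveI : Fact (Nat.Prime 5) := ⟨by norm_num⟩
    have hp2 : p ≠ 2 := by intro h; rw [h] at hodd; exact (by decide : ¬ Odd 2) hodd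
    have hqr := ZMod.exists_sq_eq_prime_iff_of_mod_four_eq_one (p := 5) (q := p)
      (by norm_num) hp2
    replace hsq5 : IsSquare ((p : ℕ) : ZMod 5) := hqr.mpr (by exact_mod_cast hsq5)
    have hcastp : ((p : ℕ) : ZMod 5) = ((p % 5 : ℕ) : ZMod 5) := (ZMod.natCast_mod p 5).symm
    rcases h5 with h | h
    · rw [hcastp, h] at hsq5
      exact not_isSquare_two_zmod_five hsq5
    · rw [hcastp, h] at hsq5
      exact not_isSquare_three_zmod_five hsq5
  · -- lam^p = 1 - lam, hence lam^(p+1) = -1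
    have hlamne : lam ≠ 0 := by
      intro h
      rw [h] at hlam
      simp at hlam
    have hp1 : lam ^ (p + 1) = -1 := by
      rw [pow_succ, hcase]
      linear_combination -hlam
    rw [two_mul, pow_add, hp1]
    ring
end

section
/- Let p be an odd prime and let A, B be integers with p ∤ B. If the discriminant Δ = A² + 4B is a nonzero quadratic residue modulo p (i.e., Δ ≢ 0 (mod p) and Δ ≡ y² (mod p) for some integer y), then the period k_{A,B}(p) exists and divides p − 1. -/
theorem general_period_dvd_p_sub_one (p : ℕ) (hp : p.Prime) (hodd : Odd p)
    (A B : ℤ) (hB : ¬ (p : ℤ) ∣ B)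
    (hΔ0 : ¬ (p : ℤ) ∣ (A ^ 2 + 4 * B))
    (hΔsq : ∃ y : ℤ, A ^ 2 + 4 * B ≡ y ^ 2 [ZMOD (p : ℤ)])
    (E : ℕ → ℤ) (hE0 : E 0 = 0) (hE1 : E 1 = 1)
    (hErec : ∀ n : ℕ, E (n + 2) = A * E (n + 1) + B * E n) :
    ∃ k : ℕ, IsLeast {i : ℕ | 0 < i ∧ E i ≡ 0 [ZMOD (p : ℤ)] ∧
      E (i + 1) ≡ 1 [ZMOD (p : ℤ)]} k ∧ k ∣ p - 1 := by
  haveI : Fact p.Prime := ⟨hp⟩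
  obtain ⟨y, hy⟩ := hΔsq
  have hp2 : p ≠ 2 := by
    rintro rfl
    exact (Nat.not_odd_iff_even.mpr (by norm_num)) hodd
  have h2 : (2 : ZMod p) ≠ 0 := by
    intro h
    have : (p : ℕ) ∣ 2 := by
      have := (ZMod.natCast_eq_zero_iff 2 p).mp (by exact_mod_cast h)
      exact this
    exact hp2 ((Nat.prime_dvd_prime_iff_eq hp Nat.prime_two).mp this)
  have hy' : (A : ZMod p) ^ 2 + 4 * (B : ZMod p) = (y : ZMod p) ^ 2 := by
    have := (ZMod.intCast_eq_intCast_iff' _ _ _).mpr hy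
    push_cast at this
    linear_combination this
  have hyne : (y : ZMod p) ≠ 0 := by
    intro h
    apply hΔ0
    rw [← ZMod.intCast_zmod_eq_zero_iff_dvd]
    push_cast
    rw [hy', h]
    ring
  have hbne : (B : ZMod p) ≠ 0 := by
    intro h
    exact hB ((ZMod.intCast_zmod_eq_zero_iff_dvd _ _).mp h)
  set α : ZMod p := ((A : ZMod p) + y) / 2 with hα
  set β : ZMod p := ((A : ZMod p) - y) / 2 with hβ
  have hsum : α + β = (A : ZMod p) := by
    have h2i : (2 : ZMod p) * 2⁻¹ = 1 := mul_inv_cancel₀ h2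
    rw [hα, hβ, div_eq_mul_inv, div_eq_mul_inv]; linear_combination (A : ZMod p) * h2i
  have hdiff : α - β = (y : ZMod p) := by
    have h2i : (2 : ZMod p) * 2⁻¹ = 1 := mul_inv_cancel₀ h2
    rw [hα, hβ, div_eq_mul_inv, div_eq_mul_inv]; linear_combination (y : ZMod p) * h2i
  have hprod : α * β = -(B : ZMod p) := by
    have h2i : (2 : ZMod p) * 2⁻¹ = 1 := mul_inv_cancel₀ h2
    rw [hα, hβ, div_eq_mul_inv, div_eq_mul_inv]
    linear_combination ((2 : ZMod p)⁻¹) ^ 2 * hy' - (B : ZMod p) * (2 * (2 : ZMod p)⁻¹ + 1) * h2i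
  have hαne : α ≠ 0 := by
    intro h
    apply hbne
    have h' := hprod
    rw [h, zero_mul] at h'
    linear_combination h'
  have hβne : β ≠ 0 := by
    intro h
    apply hbne
    have h' := hprod
    rw [h, mul_zero] at h'
    linear_combination h'
  have key : ∀ n, (E n : ZMod p) * (y : ZMod p) = α ^ n - β ^ n := by
    have H : ∀ n, (E n : ZMod p) * y = α ^ n - β ^ n ∧
        (E (n + 1) : ZMod p) * y = α ^ (n + 1) - β ^ (n + 1) := by
      intro n
      induction n with
      | zero =>
        constructor
        · simp [hE0]
        · rw [hE1]; push_cast; rw [pow_one, pow_one, hdiff, one_mul]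
      | succ n ih =>
        refine ⟨ih.2, ?_⟩
        rw [hErec n]
        push_cast
        have hb : (B : ZMod p) = -(α * β) := by rw [hprod]; ring
        calc ((A : ZMod p) * (E (n + 1) : ZMod p) + (B : ZMod p) * (E n : ZMod p)) * y
            = (α + β) * ((E (n + 1) : ZMod p) * y) - (α * β) * ((E n : ZMod p) * y) := by
              rw [← hsum, hb]; ring
          _ = (α + β) * (α ^ (n + 1) - β ^ (n + 1)) - (α * β) * (α ^ n - β ^ n) := by
              rw [ih.1, ih.2]
          _ = α ^ (n + 1 + 1) - β ^ (n + 1 + 1) := by ring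
    exact fun n => (H n).1
  have hmem : ∀ i, (E i ≡ 0 [ZMOD (p : ℤ)] ∧ E (i + 1) ≡ 1 [ZMOD (p : ℤ)]) ↔
      (α ^ i = 1 ∧ β ^ i = 1) := by
    intro i
    have c0 : E i ≡ 0 [ZMOD (p : ℤ)] ↔ ((E i : ZMod p) = 0) := by
      rw [Int.modEq_zero_iff_dvd]
      exact (ZMod.intCast_zmod_eq_zero_iff_dvd _ _).symm
    have c1 : E (i + 1) ≡ 1 [ZMOD (p : ℤ)] ↔ ((E (i + 1) : ZMod p) = 1) := by
      simpa [Int.ModEq] using (ZMod.intCast_eq_intCast_iff' (E (i + 1)) 1 p).symm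
    rw [c0, c1]
    constructor
    · rintro ⟨h0, h1⟩
      have e0 : α ^ i = β ^ i := by
        have := key i
        rw [h0, zero_mul] at this
        linear_combination -this
      have e1 : α ^ (i + 1) - β ^ (i + 1) = α - β := by
        have hk := key (i + 1)
        rw [h1, one_mul] at hk
        rw [← hk, hdiff]
      have key2 : (α - β) * α ^ i = α - β := by
        calc (α - β) * α ^ i = α ^ (i + 1) - β ^ (i + 1) + β * (β ^ i - α ^ i) := by ring
          _ = α - β := by rw [e0, e1]; ring
      have hαβ : α - β ≠ 0 := by rw [hdiff]; exact hyne
      have hai : α ^ i = 1 := by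
        have hfac : (α - β) * (α ^ i - 1) = 0 := by linear_combination key2
        rcases mul_eq_zero.mp hfac with h | h
        · exact absurd h hαβ
        · linear_combination h
      exact ⟨hai, by rw [← e0, hai]⟩
    · rintro ⟨ha, hb'⟩
      have h0 : (E i : ZMod p) = 0 := by
        have := key i
        rw [ha, hb'] at this
        simp at this
        rcases this with h | h
        · exact h
        · exact absurd h hyne
      have h1 : (E (i + 1) : ZMod p) = 1 := by
        have := key (i + 1)
        have e : α ^ (i + 1) - β ^ (i + 1) = y := by
          rw [pow_succ, pow_succ, ha, hb', one_mul, one_mul, ← hdiff]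
        rw [e, ← hdiff] at this
        have : ((E (i + 1) : ZMod p) - 1) * (α - β) = 0 := by linear_combination this
        rcases mul_eq_zero.mp this with h | h
        · linear_combination h
        · rw [hdiff] at h; exact absurd h hyne
      exact ⟨h0, h1⟩
  -- orders
  have hα1 : α ^ (p - 1) = 1 := ZMod.pow_card_sub_one_eq_one hαne
  have hβ1 : β ^ (p - 1) = 1 := ZMod.pow_card_sub_one_eq_one hβne
  have hoα : orderOf α ∣ p - 1 := orderOf_dvd_of_pow_eq_one hα1
  have hoβ : orderOf β ∣ p - 1 := orderOf_dvd_of_pow_eq_one hβ1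
  have hpsub : 0 < p - 1 := by have := hp.two_le; omega
  have hoαpos : 0 < orderOf α := Nat.pos_of_ne_zero (by rintro h; rw [h] at hoα; omega)
  have hoβpos : 0 < orderOf β := Nat.pos_of_ne_zero (by rintro h; rw [h] at hoβ; omega)
  refine ⟨Nat.lcm (orderOf α) (orderOf β), ⟨⟨Nat.pos_of_ne_zero (Nat.lcm_ne_zero hoαpos.ne' hoβpos.ne'), ?_, ?_⟩, ?_⟩, Nat.lcm_dvd hoα hoβ⟩
  · exact ((hmem _).mpr ⟨orderOf_dvd_iff_pow_eq_one.mp (Nat.dvd_lcm_left _ _),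
      orderOf_dvd_iff_pow_eq_one.mp (Nat.dvd_lcm_right _ _)⟩).1
  · exact ((hmem _).mpr ⟨orderOf_dvd_iff_pow_eq_one.mp (Nat.dvd_lcm_left _ _),
      orderOf_dvd_iff_pow_eq_one.mp (Nat.dvd_lcm_right _ _)⟩).2
  · rintro i ⟨hipos, hi0, hi1⟩
    obtain ⟨ha, hb'⟩ := (hmem i).mp ⟨hi0, hi1⟩
    exact Nat.le_of_dvd hipos (Nat.lcm_dvd (orderOf_dvd_of_pow_eq_one ha) (orderOf_dvd_of_pow_eq_one hb'))
end

section
/- Let p be an odd prime and let A, B be integers such that the discriminant Δ = A² + 4B is a quadratic nonresidue modulo p (hence p ∤ B). Then the period k_{A,B}(p) exists and divides 2(p + 1)·ord_p(B²), where ord_p(B²) is the multiplicative order of B² modulo p. -/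
open Polynomial

theorem general_period_dvd_bound (p : ℕ) (hp : p.Prime) (hodd : Odd p)
    (A B : ℤ) (hΔ : ¬ ∃ y : ZMod p, y ^ 2 = ((A ^ 2 + 4 * B : ℤ) : ZMod p))
    (E : ℕ → ℤ) (hE0 : E 0 = 0) (hE1 : E 1 = 1)
    (hErec : ∀ n : ℕ, E (n + 2) = A * E (n + 1) + B * E n) :
    ∃ k : ℕ, IsLeast {i : ℕ | 0 < i ∧ E i ≡ 0 [ZMOD (p : ℤ)] ∧
      E (i + 1) ≡ 1 [ZMOD (p : ℤ)]} k ∧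
      k ∣ 2 * (p + 1) * orderOf (((B : ZMod p)) ^ 2) := by
  haveI : Fact p.Prime := ⟨hp⟩
  set Δ : ZMod p := ((A ^ 2 + 4 * B : ℤ) : ZMod p) with hΔdef
  have hB0 : (B : ZMod p) ≠ 0 := by
    intro h
    refine hΔ ⟨(A : ZMod p), ?_⟩
    rw [hΔdef]
    push_cast
    rw [h]
    ring
  have hΔ0 : Δ ≠ 0 := fun h => hΔ ⟨0, by rw [h]; norm_num⟩

  have hirr : Irreducible (X ^ 2 - C Δ) :=
    X_pow_sub_C_irreducible_of_prime Nat.prime_two (fun b hb => hΔ ⟨b, hb⟩)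
  haveI := Fact.mk hirr
  set K := AdjoinRoot (X ^ 2 - C Δ) with hK
  set c : ZMod p →+* K := algebraMap (ZMod p) K with hc
  have hcinj : Function.Injective c := c.injective
  haveI : CharP K p := charP_of_injective_algebraMap hcinj p
  have hcint : ∀ x : ℤ, c ((x : ZMod p)) = (x : K) := fun x => map_intCast c x
  have hinj : ∀ x : ℤ, (x : K) = 0 → (x : ZMod p) = 0 := by
    intro x hx
    apply hcinj
    rw [hcint, hx, map_zero]
  have hBK : (B : K) ≠ 0 := fun h => hB0 (hinj B h)
  set δ : K := AdjoinRoot.root (X ^ 2 - C Δ) with hδ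
  have hδ2 : δ ^ 2 = ((A ^ 2 + 4 * B : ℤ) : K) := by
    have h := AdjoinRoot.eval₂_root (X ^ 2 - C Δ)
    simp only [eval₂_sub, eval₂_pow, eval₂_X, eval₂_C, sub_eq_zero] at h
    rw [hδ, h, ← hcint]
    rfl
  have hδ0 : δ ≠ 0 := by
    intro h
    apply hΔ0
    apply hinj
    rw [← hδ2, h]
    ring
  have h2K : (2 : K) ≠ 0 := by
    intro h
    have h2 : ((2 : ℤ) : ZMod p) = 0 := hinj 2 (by exact_mod_cast h)
    rw [ZMod.intCast_zmod_eq_zero_iff_dvd] at h2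
    have := Int.le_of_dvd (by norm_num) h2
    have h1 := hp.two_le
    have h2' := Nat.odd_iff.mp hodd
    omega
  set α : K := ((A : K) + δ) / 2 with hα
  have hα2 : α ^ 2 = (A : K) * α + (B : K) := by
    rw [hα]
    have hu : (2:K) * 2⁻¹ = 1 := mul_inv_cancel₀ h2K
    have hm4 : ((4 * B : ℤ) : K) = 4 * (B : K) := by
      rw [← hcint, ← hcint, Int.cast_mul, map_mul, hcint]
      push_cast
      ring
    push_cast at hδ2
    rw [div_eq_mul_inv]
    linear_combination (2⁻¹ : K) ^ 2 * hδ2 + ((2⁻¹ : K) * ((A:K)^2 + A * δ) + (B:K) * (2 * 2⁻¹ + 1)) * hu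
  have hfix : ∀ x : ℤ, (x : K) ^ p = (x : K) := by
    intro x
    rw [← hcint, ← map_pow, ZMod.pow_card]
  have hΔpow : Δ ^ (p / 2) = -1 := by
    have hns : ¬ IsSquare Δ := by
      rintro ⟨y, hy⟩
      exact hΔ ⟨y, by rw [hy]; ring⟩
    have h1 : Δ ^ (p / 2) ≠ 1 := fun h => hns ((ZMod.euler_criterion p hΔ0).mpr h)
    have h2 : (Δ ^ (p / 2)) ^ 2 = 1 := by
      rw [← pow_mul]
      have : p / 2 * 2 = p - 1 := by
        have := Nat.odd_iff.mp hodd; have := hp.two_le; omega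
      rw [this, ZMod.pow_card_sub_one_eq_one hΔ0]
    rcases sq_eq_one_iff.mp h2 with h | h
    · exact absurd h h1
    · exact h
  have hδp : δ ^ p = -δ := by
    have hsplit : p = 2 * (p / 2) + 1 := by
      have := Nat.odd_iff.mp hodd; omega
    have hcΔ : δ ^ 2 = c Δ := hδ2.trans (hcint _).symm
    calc δ ^ p = (δ ^ 2) ^ (p / 2) * δ := by
          rw [← pow_mul, ← pow_succ, ← hsplit]
      _ = -δ := by
          rw [hcΔ, ← map_pow, hΔpow]
          simp [neg_one_mul]
  have hfrob : ∀ x y : K, (x + y) ^ p = x ^ p + y ^ p := fun x y => add_pow_char x y p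
  have h2p : (2 : K) ^ p = 2 := by
    have := hfix 2; push_cast at this; exact this
  have hαp : α ^ p = ((A : K) - δ) / 2 := by
    rw [hα, div_pow, hfrob, hfix, hδp, h2p]
    ring
  have hq : α * α ^ p = -(B : K) := by
    rw [hα, hαp]
    have hu : (2:K) * 2⁻¹ = 1 := mul_inv_cancel₀ h2K
    have hm4 : ((4 * B : ℤ) : K) = 4 * (B : K) := by
      rw [← hcint, ← hcint, Int.cast_mul, map_mul, hcint]
      push_cast
      ring
    push_cast at hδ2
    rw [div_eq_mul_inv, div_eq_mul_inv]
    linear_combination (-(2⁻¹ : K) ^ 2) * hδ2 - (B:K) * (2 * 2⁻¹ + 1) * hu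
  have hα0 : α ≠ 0 := by
    intro h
    apply hBK
    have h2 := hq
    rw [h, zero_mul] at h2
    exact neg_eq_zero.mp h2.symm
  have hα1 : α ^ (p + 1) = -(B : K) := by
    rw [pow_succ, mul_comm, hq]
  have hpow : ∀ n : ℕ, α ^ (n + 1) = ((E (n + 1) : ℤ) : K) * α + (B : K) * ((E n : ℤ) : K) := by
    intro n
    induction n with
    | zero => rw [hE0, hE1]; push_cast; ring
    | succ m ih =>
      have hrec := hErec m
      calc α ^ (m + 1 + 1) = α * α ^ (m + 1) := by rw [← pow_succ']
        _ = ((E (m + 1) : ℤ) : K) * α ^ 2 + (B : K) * ((E m : ℤ) : K) * α := by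
            rw [ih]; ring
        _ = ((E (m + 2) : ℤ) : K) * α + (B : K) * ((E (m + 1) : ℤ) : K) := by
            rw [hα2, hrec]; push_cast; ring
  have hiff : ∀ i : ℕ, 0 < i →
      ((E i ≡ 0 [ZMOD (p : ℤ)] ∧ E (i + 1) ≡ 1 [ZMOD (p : ℤ)]) ↔ α ^ i = 1) := by
    intro i hi
    have hmod0 : ∀ x : ℤ, x ≡ 0 [ZMOD (p : ℤ)] ↔ (x : K) = 0 := by
      intro x
      constructor
      · intro h
        have : (x : ZMod p) = 0 := by
          have := (ZMod.intCast_eq_intCast_iff x 0 p).mpr h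
          simpa using this
        rw [← hcint, this, map_zero]
      · intro h
        have : (x : ZMod p) = 0 := hinj x h
        have := (ZMod.intCast_eq_intCast_iff x 0 p).mp (by simpa using this)
        exact this
    have hmod1 : ∀ x : ℤ, x ≡ 1 [ZMOD (p : ℤ)] ↔ (x : K) = 1 := by
      intro x
      have e1 : x ≡ 1 [ZMOD (p : ℤ)] ↔ x - 1 ≡ 0 [ZMOD (p : ℤ)] := by
        rw [Int.modEq_iff_dvd, Int.modEq_iff_dvd]
        constructor <;> intro h <;> [simpa using h; simpa using h]
      rw [e1, hmod0 (x - 1)]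
      push_cast
      rw [sub_eq_zero]
    constructor
    · rintro ⟨h0, h1⟩
      rw [hmod0] at h0
      rw [hmod1] at h1
      have h := hpow i
      rw [h0, h1, mul_zero, add_zero, one_mul] at h
      have : α ^ i * α = α := by rw [← pow_succ, h]
      exact mul_right_cancel₀ hα0 (by rw [this, one_mul])
    · intro h
      have hstep : ((E (i + 1) : ℤ) : K) * α + (B : K) * ((E i : ℤ) : K) = α := by
        have := hpow i
        rw [pow_succ, h, one_mul] at this
        exact this.symm
      have hkey : (((E (i + 1) - 1 : ℤ)) : K) * α = -(((B * E i : ℤ)) : K) := by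
        push_cast
        have hm : ((B * E i : ℤ) : K) = (B : K) * (E i : K) := by
          rw [← hcint, ← hcint, ← hcint, Int.cast_mul, map_mul]
        linear_combination hstep + hm
      have hkeyp : (((E (i + 1) - 1 : ℤ)) : K) * α ^ p = -(((B * E i : ℤ)) : K) := by
        have h1 : (((E (i + 1) - 1 : ℤ)) : K) ^ p * α ^ p = (-(((B * E i : ℤ)) : K)) ^ p := by
          rw [← mul_pow, hkey]
        rwa [hodd.neg_pow, hfix, hfix] at h1
      have hE1z : ((E (i + 1) - 1 : ℤ) : K) = 0 := by
        have hsub : (((E (i + 1) - 1 : ℤ)) : K) * (α - α ^ p) = 0 := by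
          rw [mul_sub, hkey, hkeyp, sub_self]
        have hαδ : α - α ^ p = δ := by
          rw [hα, hαp]
          have hu : (2:K) * 2⁻¹ = 1 := mul_inv_cancel₀ h2K
          rw [div_eq_mul_inv, div_eq_mul_inv]
          linear_combination δ * hu
        rw [hαδ] at hsub
        rcases mul_eq_zero.mp hsub with h' | h'
        · exact h'
        · exact absurd h' hδ0
      have hEiz : ((E i : ℤ) : K) = 0 := by
        have : ((B * E i : ℤ) : K) = 0 := by
          have := hkey
          rw [hE1z, zero_mul] at this
          exact (neg_eq_zero.mp this.symm)
        rw [← hcint, Int.cast_mul, map_mul, hcint, hcint] at this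
        rcases mul_eq_zero.mp this with h' | h'
        · exact absurd h' hBK
        · exact h'
      refine ⟨(hmod0 _).mpr hEiz, (hmod1 _).mpr ?_⟩
      have h2 := hE1z
      push_cast at h2
      linear_combination h2
  -- order facts
  set t : ℕ := orderOf (((B : ZMod p)) ^ 2) with ht
  have hB2 : ((B : ZMod p)) ^ 2 ≠ 0 := pow_ne_zero _ hB0
  have htpos : 0 < t := by
    apply IsOfFinOrder.orderOf_pos
    refine isOfFinOrder_iff_pow_eq_one.mpr ⟨p - 1, ?_, ZMod.pow_card_sub_one_eq_one hB2⟩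
    have := hp.two_le; omega
  have hα2p : α ^ (2 * (p + 1)) = ((B : K)) ^ 2 := by
    rw [mul_comm 2 (p + 1), pow_mul, hα1]
    ring
  have hN : α ^ (2 * (p + 1) * t) = 1 := by
    rw [pow_mul, hα2p]
    have : ((B : K)) ^ 2 = c (((B : ZMod p)) ^ 2) := by
      rw [map_pow, hcint]
    rw [this, ← map_pow]
    have h1 : (((B : ZMod p)) ^ 2) ^ t = 1 := pow_orderOf_eq_one _
    rw [h1, map_one]
  have hNpos : 0 < 2 * (p + 1) * t := by positivity
  have hfin : IsOfFinOrder α := isOfFinOrder_iff_pow_eq_one.mpr ⟨_, hNpos, hN⟩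
  refine ⟨orderOf α, ⟨⟨hfin.orderOf_pos, ?_⟩, ?_⟩, orderOf_dvd_of_pow_eq_one hN⟩
  · exact (hiff _ hfin.orderOf_pos).mpr (pow_orderOf_eq_one α)
  · rintro i ⟨hi, h0, h1⟩
    exact orderOf_le_of_pow_eq_one hi ((hiff i hi).mp ⟨h0, h1⟩)
end

section
/- Let p be an odd prime and let A, B be integers such that the discriminant Δ = A² + 4B is a quadratic nonresidue modulo p and B² ≡ 1 (mod p). Then the period k_{A,B}(p) exists and divides 2(p + 1). -/
theorem general_period_dvd_two_p_add_one (p : ℕ) (hp : p.Prime) (hodd : Odd p)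
    (A B : ℤ) (hΔ : ¬ ∃ y : ZMod p, y ^ 2 = ((A ^ 2 + 4 * B : ℤ) : ZMod p))
    (hB1 : B ^ 2 ≡ 1 [ZMOD (p : ℤ)])
    (E : ℕ → ℤ) (hE0 : E 0 = 0) (hE1 : E 1 = 1)
    (hErec : ∀ n : ℕ, E (n + 2) = A * E (n + 1) + B * E n) :
    ∃ k : ℕ, IsLeast {i : ℕ | 0 < i ∧ E i ≡ 0 [ZMOD (p : ℤ)] ∧
      E (i + 1) ≡ 1 [ZMOD (p : ℤ)]} k ∧ k ∣ 2 * (p + 1) := by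
  haveI : Fact p.Prime := ⟨hp⟩
  set δ : ZMod p := ((A ^ 2 + 4 * B : ℤ) : ZMod p) with hδ
  have hirr : Irreducible (Polynomial.X ^ 2 - Polynomial.C δ) := by
    refine X_pow_sub_C_irreducible_of_prime Nat.prime_two ?_
    intro b hb
    exact hΔ ⟨b, hb⟩
  haveI : Fact (Irreducible (Polynomial.X ^ 2 - Polynomial.C δ)) := ⟨hirr⟩
  set F := AdjoinRoot (Polynomial.X ^ 2 - Polynomial.C δ) with hF
  set s : F := AdjoinRoot.root _ with hs
  have hcharF : CharP F p :=
    charP_of_injective_ringHom (algebraMap (ZMod p) F).injective p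
  -- basic cast compatibility
  have hcast : ∀ x : ℤ, ((x : F)) = algebraMap (ZMod p) F ((x : ZMod p)) := by
    intro x; exact (map_intCast (algebraMap (ZMod p) F) x).symm
  have hinj : Function.Injective (algebraMap (ZMod p) F) := (algebraMap (ZMod p) F).injective
  have hcong : ∀ x y : ℤ, (x : F) = (y : F) ↔ x ≡ y [ZMOD (p : ℤ)] := by
    intro x y
    rw [hcast, hcast]
    constructor
    · intro h
      exact (ZMod.intCast_eq_intCast_iff x y p).mp (hinj h)
    · intro h
      rw [(ZMod.intCast_eq_intCast_iff x y p).mpr h]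
  -- s^2 = δ
  have hs2 : s ^ 2 = algebraMap (ZMod p) F δ := by
    have := AdjoinRoot.eval₂_root (Polynomial.X ^ 2 - Polynomial.C δ)
    rw [AdjoinRoot.algebraMap_eq]
    simpa [sub_eq_zero] using this
  have hδ0 : δ ≠ 0 := by
    intro h
    exact hΔ ⟨0, by simp [← hδ, h]⟩
  have hs0 : s ≠ 0 := by
    intro h
    apply hδ0
    apply hinj
    rw [← hs2, h, map_zero]
    ring
  have h2 : (2 : F) ≠ 0 := by
    intro h
    have := (CharP.cast_eq_zero_iff F p 2).mp h
    have hp2 := (Nat.prime_dvd_prime_iff_eq hp Nat.prime_two).mp this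
    rw [hp2, Nat.odd_iff] at hodd
    omega
  set α : F := ((A : F) + s) / 2 with hα
  set β : F := ((A : F) - s) / 2 with hβ
  have hsum : α + β = (A : F) := by rw [hα, hβ, ← add_div, div_eq_iff h2]; ring
  have hdiff : α - β = s := by rw [hα, hβ, ← sub_div, div_eq_iff h2]; ring
  have hδF : algebraMap (ZMod p) F δ = (A : F) ^ 2 + 4 * (B : F) := by
    rw [← hcast]; push_cast; ring
  have hprod : α * β = -(B : F) := by
    rw [hα, hβ, div_mul_div_comm, div_eq_iff (mul_ne_zero h2 h2)]
    linear_combination -hs2 - hδF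
  have hα2 : α ^ 2 = (A : F) * α + (B : F) := by
    linear_combination α * hsum - hprod
  have hβ2 : β ^ 2 = (A : F) * β + (B : F) := by
    linear_combination β * hsum - hprod + (α - β) * hsum - (α-β) * hsum
  -- Euler's criterion: δ^(p/2) = -1
  have hm : 2 * (p / 2) + 1 = p := by
    rcases hodd with ⟨m, hm⟩; omega
  have heuler : δ ^ (p / 2) = -1 := by
    have hsq : δ ^ (p / 2) * δ ^ (p / 2) = 1 := by
      rw [← pow_add]
      have : p / 2 + p / 2 = p - 1 := by omega
      rw [this]
      exact ZMod.pow_card_sub_one_eq_one hδ0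
    rcases mul_self_eq_one_iff.mp hsq with h1 | h1
    · exfalso
      apply hΔ
      have : IsSquare δ := (ZMod.euler_criterion p hδ0).mpr h1
      rcases this with ⟨y, hy⟩
      exact ⟨y, by rw [hy]; ring⟩
    · exact h1
  -- Frobenius computations
  have hxp : ∀ x : ℤ, (x : F) ^ p = (x : F) := by
    intro x
    rw [hcast, ← map_pow, ZMod.pow_card]
  have hsp : s ^ p = -s := by
    calc s ^ p = (s ^ 2) ^ (p / 2) * s := by rw [← pow_mul, ← pow_succ, hm]
    _ = -s := by rw [hs2, ← map_pow, heuler, map_neg, map_one]; ring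
  have h2p : (2 : F) ^ p = 2 := by
    have := hxp 2; push_cast at this; exact this
  haveI : ExpChar F p := ExpChar.prime hp
  have hfrob : ∀ x y : F, (x + y) ^ p = x ^ p + y ^ p := by
    intro x y; exact add_pow_char x y p
  have hαp : α ^ p = β := by
    rw [hα, hβ, div_pow, hfrob, hxp, hsp, h2p]
    ring
  have hβp : β ^ p = α := by
    have hb : β = ((A : F) + (-s)) / 2 := by rw [hβ]; ring
    rw [hb, hα, div_pow, hfrob, hxp, h2p, hodd.neg_pow, hsp]
    ring
  -- α and β have order dividing 2(p+1)
  have hαT : α ^ (2 * (p + 1)) = 1 := by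
    have h1 : α ^ (p + 1) = -(B : F) := by
      rw [pow_succ, hαp]; linear_combination hprod
    have hB : ((B : F)) ^ 2 = 1 := by
      have := (hcong (B ^ 2) 1).mpr hB1
      push_cast at this
      exact this
    calc α ^ (2 * (p + 1)) = (α ^ (p + 1)) ^ 2 := by rw [← pow_mul, Nat.mul_comm]
    _ = 1 := by rw [h1, neg_sq]; exact hB
  have hβT : β ^ (2 * (p + 1)) = 1 := by
    have h1 : β ^ (p + 1) = -(B : F) := by
      rw [pow_succ, hβp]; exact hprod
    have hB : ((B : F)) ^ 2 = 1 := by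
      have := (hcong (B ^ 2) 1).mpr hB1
      push_cast at this
      exact this
    calc β ^ (2 * (p + 1)) = (β ^ (p + 1)) ^ 2 := by rw [← pow_mul, Nat.mul_comm]
    _ = 1 := by rw [h1, neg_sq]; exact hB
  -- closed form
  have key : ∀ n : ℕ, ((E n : F)) * s = α ^ n - β ^ n := by
    intro n
    induction n using Nat.strong_induction_on with
    | _ n ih =>
      match n with
      | 0 => simp [hE0]
      | 1 => simp [hE1, ← hdiff]
      | (n+2) =>
        have h1 := ih (n+1) (by omega)
        have h0 := ih n (by omega)
        rw [hErec n]
        push_cast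
        have e1 : α ^ (n + 2) = α ^ n * α ^ 2 := by ring
        have e2 : β ^ (n + 2) = β ^ n * β ^ 2 := by ring
        rw [e1, e2, hα2, hβ2]
        have c1 : ((A * E (n + 1) : ℤ) : F) = (A : F) * (E (n + 1) : F) := by
          simp only [hcast, Int.cast_mul, map_mul]
        have c2 : ((B * E n : ℤ) : F) = (B : F) * (E n : F) := by
          simp only [hcast, Int.cast_mul, map_mul]
        rw [c1, c2]
        linear_combination (A : F) * h1 + (B : F) * h0
  set T : ℕ := 2 * (p + 1) with hT
  have hper : ∀ n : ℕ, ((E (n + T) : F)) = ((E n : F)) := by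
    intro n
    have h1 := key (n + T)
    have h2 := key n
    rw [pow_add, pow_add, hαT, hβT, mul_one, mul_one] at h1
    have := h1.trans h2.symm
    exact mul_right_cancel₀ hs0 this
  have hcongper : ∀ n : ℕ, E (n + T) ≡ E n [ZMOD (p : ℤ)] := fun n =>
    (hcong _ _).mp (hper n)
  set S : Set ℕ := {i : ℕ | 0 < i ∧ E i ≡ 0 [ZMOD (p : ℤ)] ∧
      E (i + 1) ≡ 1 [ZMOD (p : ℤ)]} with hS
  have hTS : T ∈ S := by
    refine ⟨by omega, ?_, ?_⟩
    · have := hcongper 0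
      rw [Nat.zero_add, hE0] at this
      exact this
    · have := hcongper 1
      rw [hE1] at this
      have h : 1 + T = T + 1 := by omega
      rw [h] at this
      exact this
  have hne : S.Nonempty := ⟨T, hTS⟩
  refine ⟨sInf S, ⟨Nat.sInf_mem hne, fun m hm => Nat.sInf_le hm⟩, ?_⟩
  set k : ℕ := sInf S with hk
  have hkS : k ∈ S := Nat.sInf_mem hne
  obtain ⟨hk0, hkE, hkE1⟩ := hkS
  -- period k
  have perk : ∀ n : ℕ, E (n + k) ≡ E n [ZMOD (p : ℤ)] := by
    intro n
    induction n using Nat.strong_induction_on with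
    | _ n ih =>
      match n with
      | 0 => rw [Nat.zero_add, hE0]; exact hkE
      | 1 => rw [hE1]; have h : 1 + k = k + 1 := by omega
             rw [h]; exact hkE1
      | (n+2) =>
        have h1 := ih (n+1) (by omega)
        have h0 := ih n (by omega)
        have e : n + 2 + k = (n + k) + 2 := by omega
        rw [e, hErec (n + k), hErec n]
        have e1 : n + k + 1 = (n + 1) + k := by omega
        rw [e1]
        exact Int.ModEq.add (Int.ModEq.mul_left A h1) (Int.ModEq.mul_left B h0)
  have permul : ∀ j n : ℕ, E (n + j * k) ≡ E n [ZMOD (p : ℤ)] := by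
    intro j
    induction j with
    | zero => intro n; simp
    | succ j ihj =>
      intro n
      have e : n + (j + 1) * k = (n + j * k) + k := by ring
      rw [e]
      exact (perk (n + j * k)).trans (ihj n)
  -- k divides T
  have hkT : k ∣ T := by
    rcases Nat.eq_zero_or_pos (T % k) with hr | hr
    · exact Nat.dvd_of_mod_eq_zero hr
    · exfalso
      have hlt : T % k < k := Nat.mod_lt _ hk0
      have hdm : T % k + (T / k) * k = T := by
        rw [Nat.add_comm, Nat.mul_comm]
        exact Nat.div_add_mod T k
      have h0' : E (T % k) ≡ 0 [ZMOD (p : ℤ)] := by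
        have := permul (T / k) (T % k)
        rw [hdm] at this
        exact (this.symm.trans hTS.2.1)
      have h1' : E (T % k + 1) ≡ 1 [ZMOD (p : ℤ)] := by
        have := permul (T / k) (T % k + 1)
        have e : T % k + 1 + (T / k) * k = T + 1 := by omega
        rw [e] at this
        exact (this.symm.trans hTS.2.2)
      have : k ≤ T % k := Nat.sInf_le ⟨hr, h0', h1'⟩
      omega
  exact hkT
end
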